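/- arXiv:1504.03263 — 2 statements merged into one kernel-verified Lean document; each statement's English description precedes it below -/
import Mathlib

section
/- Let Δ be a set of continuous derivations of the ring of arithmetic functions under Dirichlet convolution. An arithmetic function f lies in the common kernel of Δ if and only if Exp(f) lies in the common kernel of Δ. -/
open ArithmeticFunction
open scoped Classical

/-- The embedding of `ℂ` into the Dirichlet ring of arithmetic functions,
sending `c` to the function with value `c` at `1` and `0` elsewhere. -/
noncomputable def CC : ℂ →+* ArithmeticFunction ℂ where
  toFun c := ⟨fun n => if n = 1 then c else 0, by simp⟩
  map_zero' := by ext n; simp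
  map_one' := by ext n; simp [ArithmeticFunction.one_apply]
  map_add' a b := by ext n; by_cases h : n = 1 <;> erw [ArithmeticFunction.add_apply] <;> simp [h]
  map_mul' a b := by
    ext n
    erw [ArithmeticFunction.mul_apply]
    by_cases h : n = 1
    · subst h
      rw [show Nat.divisorsAntidiagonal 1 = {(1,1)} from rfl]
      simp
    · rw [Finset.sum_eq_zero]
      · simp [h]
      · rintro ⟨d, e⟩ hde
        rw [Nat.mem_divisorsAntidiagonal] at hde
        rcases Decidable.eq_or_ne d 1 with hd | hd
        · have : e ≠ 1 := by rintro rfl; exact h (by simp [← hde.1, hd])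
          simp [this]
        · simp [hd]

/-- The order `v f` of an arithmetic function: the least element of the support
(`sInf` of the empty set is `0` for `f = 0`; that case is always excluded by hypotheses). -/
noncomputable def ordN (f : ArithmeticFunction ℂ) : ℕ := sInf {n : ℕ | f n ≠ 0}

/-- The order as an extended natural number, `⊤` for `f = 0`. -/
noncomputable def ordE (f : ArithmeticFunction ℂ) : ℕ∞ :=
  sInf ((fun n : ℕ => (n : ℕ∞)) '' {n : ℕ | f n ≠ 0})

/-- The norm `‖f‖ = 1/v(f)`, with `1/∞ = 0`. -/
noncomputable def nrm (f : ArithmeticFunction ℂ) : ℝ :=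
  if f = 0 then 0 else 1 / (ordN f : ℝ)

/-- Extension of an arithmetic function to `ℝ`, vanishing off `ℕ`. -/
noncomputable def extR (f : ArithmeticFunction ℂ) (x : ℝ) : ℂ :=
  if h : ∃ n : ℕ, (n : ℝ) = x then f h.choose else 0

/-- The exponential map `Exp f = exp(f 1) * ∑ (f - f 1)^k / k!` of the Dirichlet ring.
Since `(f - f 1)^k` has order `≥ 2^k`, the value of the infinite series at `n` equals the
value of the partial sum up to `k = n`. -/
noncomputable def ExpA (f : ArithmeticFunction ℂ) : ArithmeticFunction ℂ :=
  ⟨fun n => Complex.exp (f 1) *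
      ((∑ k ∈ Finset.range (n + 1),
        CC ((Nat.factorial k : ℂ)⁻¹) * (f - CC (f 1)) ^ k) n), by simp⟩

/-- The `p`-basic derivation `(∂_p f) n = v_p (n p) • f (n p)`. -/
noncomputable def DP (p : ℕ) (f : ArithmeticFunction ℂ) : ArithmeticFunction ℂ :=
  ⟨fun n => (padicValNat p (n * p) : ℂ) * f (n * p), by simp⟩

/-- The log-derivation `(∂_L f) n = log n * f n`. -/
noncomputable def DL (f : ArithmeticFunction ℂ) : ArithmeticFunction ℂ :=
  ⟨fun n => (Real.log n : ℂ) * f n, by simp⟩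

/-- The pointwise multiplication operator `𝔪_g`. -/
noncomputable def MG (g f : ArithmeticFunction ℂ) : ArithmeticFunction ℂ :=
  ⟨fun n => g n * f n, by simp⟩

/-- Integer powers `𝔪_g^i` of the pointwise multiplication operator:
`(𝔪_g^i f) n = (g n)^i * f n`. -/
noncomputable def MGi (g : ArithmeticFunction ℂ) (i : ℤ) (f : ArithmeticFunction ℂ) :
    ArithmeticFunction ℂ := ⟨fun n => g n ^ i * f n, by simp⟩

/-- `D` is a (ℂ-linear) derivation of the ring of arithmetic functions
under Dirichlet convolution. -/
def IsDerivationA (D : ArithmeticFunction ℂ → ArithmeticFunction ℂ) : Prop :=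
  (∀ f g, D (f + g) = D f + D g) ∧
  (∀ (c : ℂ) (f), D (CC c * f) = CC c * D f) ∧
  (∀ f g, D (f * g) = D f * g + f * D g)

/-- Convergence of a sequence of arithmetic functions in the norm topology. -/
def TendstoA (s : ℕ → ArithmeticFunction ℂ) (l : ArithmeticFunction ℂ) : Prop :=
  Filter.Tendsto (fun m => nrm (s m - l)) Filter.atTop (nhds 0)

/-- (Sequential) continuity of a map in the norm topology, which for this
ultrametric is equivalent to continuity. -/
def ContinuousA (D : ArithmeticFunction ℂ → ArithmeticFunction ℂ) : Prop :=
  ∀ (s : ℕ → ArithmeticFunction ℂ) (l), TendstoA s l → TendstoA (fun m => D (s m)) (D l)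

/-- The indicator function `e_m` of the singleton `{m}`. -/
noncomputable def En (m : ℕ) : ArithmeticFunction ℂ :=
  ⟨fun n => if 0 < n ∧ n = m then 1 else 0, by simp⟩

/-- The constant one arithmetic function `𝟙`. -/
noncomputable def OneA : ArithmeticFunction ℂ := ⟨fun n => if n = 0 then 0 else 1, by simp⟩

/-- The ℂ-algebra structure of the ring of arithmetic functions, via `CC`. -/
noncomputable instance : Algebra ℂ (ArithmeticFunction ℂ) := CC.toAlgebra


/- ### Auxiliary lemmas -/

section Aux

lemma CC_apply (c : ℂ) (n : ℕ) : CC c n = if n = 1 then c else 0 := rfl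

lemma subA (f g : ArithmeticFunction ℂ) (n : ℕ) : (f - g) n = f n - g n := rfl

lemma CC_mul_apply (c : ℂ) (h : ArithmeticFunction ℂ) (n : ℕ) :
    (CC c * h) n = c * h n := by
  rcases Nat.eq_zero_or_pos n with rfl | hn
  · simp
  rw [mul_apply, Finset.sum_eq_single (1, n)]
  · simp [CC_apply]
  · rintro ⟨d, e⟩ hde hne
    rw [Nat.mem_divisorsAntidiagonal] at hde
    rcases Decidable.eq_or_ne d 1 with rfl | hd
    · have : e = n := by simpa using hde.1
      subst this
      exact absurd rfl hne
    · simp [CC_apply, hd]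
  · intro hmem
    exact absurd (Nat.mem_divisorsAntidiagonal.mpr ⟨one_mul n, by omega⟩) hmem

lemma sumA {ι : Type*} (s : Finset ι) (F : ι → ArithmeticFunction ℂ) (n : ℕ) :
    (∑ i ∈ s, F i) n = ∑ i ∈ s, F i n := by
  induction s using Finset.cons_induction with
  | empty => simp
  | cons a s ha ih => rw [Finset.sum_cons, Finset.sum_cons, ArithmeticFunction.add_apply, ih]

/-- Cancellation: if `h 1 ≠ 0` and `h * k = 0` then `k = 0`. -/
lemma cancelA (h k : ArithmeticFunction ℂ) (h1 : h 1 ≠ 0) (hk : h * k = 0) : k = 0 := by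
  ext n
  rw [ArithmeticFunction.zero_apply]
  induction n using Nat.strong_induction_on with
  | _ n ih =>
    rcases Nat.eq_zero_or_pos n with rfl | hn
    · exact ArithmeticFunction.map_zero
    have h0 : (h * k) n = 0 := by rw [hk, ArithmeticFunction.zero_apply]
    rw [mul_apply, Finset.sum_eq_single (1, n)] at h0
    · exact (mul_eq_zero.mp h0).resolve_left h1
    · rintro ⟨d, e⟩ hde hne
      rw [Nat.mem_divisorsAntidiagonal] at hde
      rcases Decidable.eq_or_ne d 1 with rfl | hd
      · have : e = n := by simpa using hde.1
        subst this
        exact absurd rfl hne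
      · have hdne : d ≠ 0 := by
          rintro rfl
          rw [zero_mul] at hde
          exact hde.2 hde.1.symm
        have hd2 : 2 ≤ d := by omega
        have he : 0 < e := by
          rcases Nat.eq_zero_or_pos e with rfl | he
          · rw [mul_zero] at hde
            exact absurd hde.1.symm hde.2
          · exact he
        have hen : e < n := by nlinarith [hde.1]
        rw [ih e hen, mul_zero]
    · intro hmem
      exact absurd (Nat.mem_divisorsAntidiagonal.mpr ⟨one_mul n, by omega⟩) hmem

/-- Powers of functions of order ≥ 2 vanish below `2^k`. -/
lemma pow_vanish (g : ArithmeticFunction ℂ) (hg : g 1 = 0) :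
    ∀ k n, n < 2 ^ k → (g ^ k) n = 0 := by
  intro k
  induction k with
  | zero =>
    intro n hn
    interval_cases n
    simp
  | succ k ih =>
    intro n hn
    rw [pow_succ, mul_apply]
    apply Finset.sum_eq_zero
    rintro ⟨d, e⟩ hde
    rw [Nat.mem_divisorsAntidiagonal] at hde
    by_cases hd : d < 2 ^ k
    · rw [ih d hd, zero_mul]
    · push_neg at hd
      have he : e < 2 := by
        by_contra he
        push_neg at he
        have : 2 ^ (k + 1) ≤ n := by
          calc 2 ^ (k + 1) = 2 ^ k * 2 := by ring
          _ ≤ d * e := Nat.mul_le_mul hd he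
          _ = n := hde.1
        omega
      interval_cases e
      · exfalso; omega
      · rw [hg, mul_zero]

lemma nrm_nonneg (h : ArithmeticFunction ℂ) : 0 ≤ nrm h := by
  rw [nrm]
  split
  · exact le_refl 0
  · positivity

lemma ordN_pos (h : ArithmeticFunction ℂ) (hne : h ≠ 0) :
    0 < ordN h ∧ h (ordN h) ≠ 0 := by
  have hS : {n : ℕ | h n ≠ 0}.Nonempty := by
    rw [Set.nonempty_iff_ne_empty]
    intro he
    apply hne
    ext n
    rw [ArithmeticFunction.zero_apply]
    by_contra hc
    exact (Set.eq_empty_iff_forall_notMem.mp he n) hc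
  have hord : ordN h = sInf {n : ℕ | h n ≠ 0} := rfl
  have hmem := Nat.sInf_mem hS
  rw [← hord] at hmem
  have hval : h (ordN h) ≠ 0 := hmem
  refine ⟨?_, hval⟩
  rcases Nat.eq_zero_or_pos (ordN h) with h0 | h0
  · rw [h0] at hval
    exact absurd ArithmeticFunction.map_zero hval
  · exact h0

lemma nrm_le (h : ArithmeticFunction ℂ) (m : ℕ) (hv : ∀ n ≤ m, h n = 0) :
    nrm h ≤ 1 / (m + 1 : ℝ) := by
  rw [nrm]
  split
  · positivity
  · next hne =>
    obtain ⟨hpos, hval⟩ := ordN_pos h hne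
    have hord : m + 1 ≤ ordN h := by
      by_contra hlt
      push_neg at hlt
      exact hval (hv _ (by omega))
    apply one_div_le_one_div_of_le (by positivity)
    exact_mod_cast hord

lemma of_nrm_le (h : ArithmeticFunction ℂ) (m : ℕ) (hle : nrm h ≤ 1 / (m + 1 : ℝ)) :
    ∀ n ≤ m, h n = 0 := by
  intro n hn
  by_contra hne0
  have hne : h ≠ 0 := by rintro rfl; simp at hne0
  rw [nrm, if_neg hne] at hle
  obtain ⟨hpos, _⟩ := ordN_pos h hne
  have h1 : ordN h ≤ n := Nat.sInf_le hne0
  have h2 : (m + 1 : ℝ) ≤ (ordN h : ℝ) := by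
    rw [div_le_div_iff₀ (by exact_mod_cast hpos) (by positivity)] at hle
    linarith
  have h3 : (ordN h : ℝ) ≤ n := by exact_mod_cast h1
  have h4 : (n : ℝ) ≤ m := by exact_mod_cast hn
  linarith

lemma mul_vanish (h k : ArithmeticFunction ℂ) (m : ℕ) (hv : ∀ n ≤ m, h n = 0) :
    ∀ n ≤ m, (h * k) n = 0 := by
  intro n hn
  rw [mul_apply]
  apply Finset.sum_eq_zero
  rintro ⟨d, e⟩ hde
  rw [Nat.mem_divisorsAntidiagonal] at hde
  have hdn : d ≤ n := Nat.le_of_dvd (by omega) ⟨e, hde.1.symm⟩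
  rw [hv d (le_trans hdn hn), zero_mul]

lemma nrm_mul_le (h k : ArithmeticFunction ℂ) : nrm (h * k) ≤ nrm h := by
  by_cases h0 : h * k = 0
  · rw [h0]
    simpa [nrm] using nrm_nonneg h
  have hne : h ≠ 0 := by rintro rfl; simp at h0
  obtain ⟨hp1, hv1⟩ := ordN_pos (h * k) h0
  obtain ⟨hp2, hv2⟩ := ordN_pos h hne
  rw [nrm, if_neg h0, nrm, if_neg hne]
  have hord : ordN h ≤ ordN (h * k) := by
    by_contra hlt
    push_neg at hlt
    refine hv1 (mul_vanish h k (ordN (h * k)) (fun n hn => ?_) _ le_rfl)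
    by_contra hne0
    have hx : ordN h ≤ n := Nat.sInf_le hne0
    omega
  apply one_div_le_one_div_of_le (by exact_mod_cast hp2)
  exact_mod_cast hord

lemma tendstoA_of_vanish (s : ℕ → ArithmeticFunction ℂ) (l : ArithmeticFunction ℂ)
    (hv : ∀ m, ∀ n ≤ m, (s m - l) n = 0) : TendstoA s l := by
  rw [TendstoA]
  apply squeeze_zero (fun m => nrm_nonneg _) (fun m => nrm_le _ m (hv m))
  exact tendsto_one_div_add_atTop_nhds_zero_nat

lemma tendstoA_unique (s : ℕ → ArithmeticFunction ℂ) (l l' : ArithmeticFunction ℂ)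
    (h1 : TendstoA s l) (h2 : TendstoA s l') : l = l' := by
  ext n
  obtain ⟨N1, hN1⟩ := Metric.tendsto_atTop.mp h1 (1 / (n + 1 : ℝ)) (by positivity)
  obtain ⟨N2, hN2⟩ := Metric.tendsto_atTop.mp h2 (1 / (n + 1 : ℝ)) (by positivity)
  set m := max N1 N2 with hm
  have d1 : nrm (s m - l) ≤ 1 / (n + 1 : ℝ) := by
    have := hN1 m (le_max_left _ _)
    rw [Real.dist_eq, sub_zero, abs_of_nonneg (nrm_nonneg _)] at this
    linarith
  have d2 : nrm (s m - l') ≤ 1 / (n + 1 : ℝ) := by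
    have := hN2 m (le_max_right _ _)
    rw [Real.dist_eq, sub_zero, abs_of_nonneg (nrm_nonneg _)] at this
    linarith
  have v1 := of_nrm_le _ _ d1 n le_rfl
  have v2 := of_nrm_le _ _ d2 n le_rfl
  have e1 : s m n - l n = 0 := v1
  have e2 : s m n - l' n = 0 := v2
  linear_combination e2 - e1

lemma tendstoA_shift (s : ℕ → ArithmeticFunction ℂ) (l : ArithmeticFunction ℂ)
    (h : TendstoA s l) : TendstoA (fun m => s (m + 1)) l := by
  rw [TendstoA] at h ⊢
  exact h.comp (Filter.tendsto_add_atTop_nat 1)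

lemma tendstoA_mul_right (s : ℕ → ArithmeticFunction ℂ) (l c : ArithmeticFunction ℂ)
    (h : TendstoA s l) : TendstoA (fun m => s m * c) (l * c) := by
  rw [TendstoA] at h ⊢
  refine squeeze_zero (fun m => nrm_nonneg _) (fun m => ?_) h
  rw [show s m * c - l * c = (s m - l) * c by ring]
  exact nrm_mul_le _ _

lemma D_zero (D : ArithmeticFunction ℂ → ArithmeticFunction ℂ) (hD : IsDerivationA D) :
    D 0 = 0 := by
  have h := hD.1 0 0
  rw [add_zero] at h
  linear_combination -h

lemma D_one (D : ArithmeticFunction ℂ → ArithmeticFunction ℂ) (hD : IsDerivationA D) :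
    D 1 = 0 := by
  have h := hD.2.2 1 1
  rw [mul_one, one_mul, mul_one] at h
  linear_combination -h

lemma D_CC (D : ArithmeticFunction ℂ → ArithmeticFunction ℂ) (hD : IsDerivationA D)
    (c : ℂ) : D (CC c) = 0 := by
  have h := hD.2.1 c 1
  rw [mul_one, D_one D hD, mul_zero] at h
  exact h

lemma D_sum (D : ArithmeticFunction ℂ → ArithmeticFunction ℂ) (hD : IsDerivationA D)
    {ι : Type*} (s : Finset ι) (F : ι → ArithmeticFunction ℂ) :
    D (∑ i ∈ s, F i) = ∑ i ∈ s, D (F i) := by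
  induction s using Finset.cons_induction with
  | empty => simpa using D_zero D hD
  | cons a s ha ih => rw [Finset.sum_cons, Finset.sum_cons, hD.1, ih]

lemma D_pow (D : ArithmeticFunction ℂ → ArithmeticFunction ℂ) (hD : IsDerivationA D)
    (g : ArithmeticFunction ℂ) (k : ℕ) :
    D (g ^ (k + 1)) = CC ((k : ℂ) + 1) * (g ^ k * D g) := by
  induction k with
  | zero =>
    rw [pow_one, pow_zero, one_mul]
    norm_num
  | succ k ih =>
    rw [pow_succ, hD.2.2, ih]
    have hcc : CC ((((k : ℕ) + 1 : ℕ) : ℂ) + 1) = CC ((k : ℂ)) + 1 + 1 := by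
      push_cast
      rw [show ((k : ℂ) + 1 + 1) = (k : ℂ) + (1 + 1) by ring, map_add, map_add, map_one]
      ring
    have hcc2 : CC ((k : ℂ) + 1) = CC ((k : ℂ)) + 1 := by rw [map_add, map_one]
    rw [hcc, hcc2]
    ring

/-- The partial sums of the exponential series. -/
noncomputable def SS (g : ArithmeticFunction ℂ) (m : ℕ) : ArithmeticFunction ℂ :=
  ∑ k ∈ Finset.range (m + 1), CC ((Nat.factorial k : ℂ)⁻¹) * g ^ k

lemma D_SS (D : ArithmeticFunction ℂ → ArithmeticFunction ℂ) (hD : IsDerivationA D)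
    (g : ArithmeticFunction ℂ) (m : ℕ) : D (SS g (m + 1)) = SS g m * D g := by
  have h1 : SS g (m + 1) =
      (∑ i ∈ Finset.range (m + 1), CC ((Nat.factorial (i + 1) : ℂ)⁻¹) * g ^ (i + 1)) +
        CC ((Nat.factorial 0 : ℂ)⁻¹) * g ^ 0 := by
    rw [SS, Finset.sum_range_succ']
  rw [h1, hD.1, D_sum D hD]
  have h0 : D (CC ((Nat.factorial 0 : ℂ)⁻¹) * g ^ 0) = 0 := by
    rw [pow_zero, mul_one, D_CC D hD]
  rw [h0, add_zero]
  have hterm : ∀ i, D (CC ((Nat.factorial (i + 1) : ℂ)⁻¹) * g ^ (i + 1)) =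
      CC ((Nat.factorial i : ℂ)⁻¹) * g ^ i * D g := by
    intro i
    rw [hD.2.1, D_pow D hD, ← mul_assoc, ← map_mul]
    have hc : ((Nat.factorial (i + 1) : ℂ))⁻¹ * ((i : ℂ) + 1) = ((Nat.factorial i : ℂ))⁻¹ := by
      rw [Nat.factorial_succ]
      have h1 : ((i : ℂ) + 1) ≠ 0 := Nat.cast_add_one_ne_zero i
      have h2 : ((Nat.factorial i : ℂ)) ≠ 0 := by
        exact_mod_cast Nat.cast_ne_zero.mpr (Nat.factorial_ne_zero i)
      push_cast
      field_simp
    rw [hc, mul_assoc]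
  simp_rw [hterm]
  rw [SS, Finset.sum_mul]

lemma ExpA_apply (f : ArithmeticFunction ℂ) (n : ℕ) : ExpA f n = Complex.exp (f 1) *
    ((∑ k ∈ Finset.range (n + 1),
      CC ((Nat.factorial k : ℂ)⁻¹) * (f - CC (f 1)) ^ k) n) := rfl

lemma SS_apply_of_le (g : ArithmeticFunction ℂ) (hg : g 1 = 0) (m n : ℕ) (hn : n ≤ m) :
    (SS g m) n = (SS g n) n := by
  rw [SS, SS, sumA, sumA]
  symm
  apply Finset.sum_subset (Finset.range_subset_range.mpr (by omega))
  intro k hk hk2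
  simp only [Finset.mem_range, not_lt] at hk2
  have hlt : n < 2 ^ k := lt_of_lt_of_le (by omega) (Nat.le_of_lt (Nat.lt_two_pow_self (n := k)))
  rw [CC_mul_apply, pow_vanish g hg k n hlt, mul_zero]

lemma ExpA_eq_SS (g : ArithmeticFunction ℂ) (hg : g 1 = 0) (n : ℕ) :
    ExpA g n = SS g n n := by
  rw [ExpA_apply, hg, _root_.map_zero (f := CC), sub_zero, Complex.exp_zero, one_mul, SS]

lemma tendsto_SS (g : ArithmeticFunction ℂ) (hg : g 1 = 0) : TendstoA (SS g) (ExpA g) := by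
  apply tendstoA_of_vanish
  intro m n hn
  rw [subA, ExpA_eq_SS g hg, SS_apply_of_le g hg m n hn, sub_self]

lemma D_ExpA (D : ArithmeticFunction ℂ → ArithmeticFunction ℂ) (hD : IsDerivationA D)
    (hC : ContinuousA D) (g : ArithmeticFunction ℂ) (hg : g 1 = 0) :
    D (ExpA g) = ExpA g * D g := by
  have h1 := tendsto_SS g hg
  have h2 := hC _ _ h1
  have h3 := tendstoA_shift _ _ h2
  have heq : (fun m => SS g m * D g) = fun m => D (SS g (m + 1)) :=
    funext fun m => (D_SS D hD g m).symm
  have h4 : TendstoA (fun m => SS g m * D g) (D (ExpA g)) := by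
    rw [heq]; exact h3
  exact (tendstoA_unique _ _ _ (tendstoA_mul_right _ _ _ h1) h4).symm

lemma ExpA_one_apply (g : ArithmeticFunction ℂ) (hg : g 1 = 0) : ExpA g 1 = 1 := by
  rw [ExpA_eq_SS g hg, SS, sumA, Finset.sum_range_succ, Finset.sum_range_one,
    CC_mul_apply, CC_mul_apply, pow_zero, pow_one, hg, one_apply]
  norm_num

lemma ExpA_factor (f : ArithmeticFunction ℂ) :
    ExpA f = CC (Complex.exp (f 1)) * ExpA (f - CC (f 1)) := by
  ext n
  rw [CC_mul_apply, ExpA_apply, ExpA_apply]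
  have hg : (f - CC (f 1)) 1 = 0 := by
    rw [subA, CC_apply]
    simp
  rw [hg, _root_.map_zero (f := CC), sub_zero, Complex.exp_zero, one_mul]

end Aux

/-- For a set `Δ` of continuous derivations, `f ∈ ker Δ` iff `Exp f ∈ ker Δ`. -/
theorem stmt5 (Δ : Set (ArithmeticFunction ℂ → ArithmeticFunction ℂ))
    (hΔ : ∀ D ∈ Δ, IsDerivationA D ∧ ContinuousA D) (f : ArithmeticFunction ℂ) :
    (∀ D ∈ Δ, D f = 0) ↔ (∀ D ∈ Δ, D (ExpA f) = 0) := by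
  have key : ∀ D ∈ Δ, (D f = 0 ↔ D (ExpA f) = 0) := by
    intro D hDm
    obtain ⟨hD, hC⟩ := hΔ D hDm
    set g := f - CC (f 1) with hgdef
    have hg : g 1 = 0 := by
      rw [hgdef, subA, CC_apply]
      simp
    have hDf : D f = D g := by
      have hf : f = g + CC (f 1) := by rw [hgdef]; ring
      calc D f = D (g + CC (f 1)) := by rw [← hf]
      _ = D g + D (CC (f 1)) := hD.1 _ _
      _ = D g := by rw [D_CC D hD, add_zero]
    have hfac : D (ExpA f) = CC (Complex.exp (f 1)) * (ExpA g * D g) := by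
      rw [ExpA_factor f, ← hgdef, hD.2.1, D_ExpA D hD hC g hg]
    constructor
    · intro h0
      rw [hDf] at h0
      rw [hfac, h0, mul_zero, mul_zero]
    · intro h0
      rw [hfac] at h0
      have h1 : ExpA g * D g = 0 := by
        have h2 := congrArg (fun x => CC (Complex.exp (f 1))⁻¹ * x) h0
        simp only [← mul_assoc, ← map_mul, mul_zero] at h2
        rw [inv_mul_cancel₀ (Complex.exp_ne_zero _), map_one, one_mul] at h2
        exact h2
      have h3 : D g = 0 :=
        cancelA (ExpA g) (D g) (by rw [ExpA_one_apply g hg]; exact one_ne_zero) h1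
      rw [hDf, h3]
  constructor
  · intro H D hDm
    exact (key D hDm).mp (H D hDm)
  · intro H D hDm
    exact (key D hDm).mpr (H D hDm)
end

section
/- Let f_1,...,f_n be arithmetic functions, D_1,...,D_n continuous derivations of the arithmetic function ring, and k an integer such that Exp^k(f_i) is defined for all i. Then det(D_j f_i) = 0 if and only if det(D_j Exp^k(f_i)) = 0, where determinants are taken in the Dirichlet convolution ring. -/
open ArithmeticFunction
open scoped Classical

namespace Stmt6Helpers

open Finset

lemma CC_apply (c : ℂ) (n : ℕ) : CC c n = if n = 1 then c else 0 := rfl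

lemma CC_mul_apply (c : ℂ) (x : ArithmeticFunction ℂ) (n : ℕ) :
    (CC c * x) n = c * x n := by
  rcases Nat.eq_zero_or_pos n with rfl | hn
  · simp
  rw [ArithmeticFunction.mul_apply, Finset.sum_eq_single (1, n)]
  · simp [CC_apply]
  · rintro ⟨d, e⟩ hde hne
    rw [Nat.mem_divisorsAntidiagonal] at hde
    rcases eq_or_ne d 1 with rfl | hd
    · exact absurd (by rw [show e = n by simpa using hde.1]) hne
    · simp [CC_apply, hd]
  · intro hmem
    exact absurd (Nat.mem_divisorsAntidiagonal.2 ⟨one_mul n, hn.ne'⟩) hmem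

/-- `x` vanishes strictly below `N`. -/
def Van (N : ℕ) (x : ArithmeticFunction ℂ) : Prop := ∀ n < N, x n = 0

lemma Van.mono {M N : ℕ} (h : M ≤ N) {x : ArithmeticFunction ℂ} (hx : Van N x) : Van M x :=
  fun n hn => hx n (lt_of_lt_of_le hn h)

lemma Van_mul_left {N : ℕ} {x : ArithmeticFunction ℂ} (hx : Van N x)
    (y : ArithmeticFunction ℂ) : Van N (x * y) := by
  intro n hn
  rw [ArithmeticFunction.mul_apply, Finset.sum_eq_zero]
  rintro ⟨d, e⟩ hde
  rw [Nat.mem_divisorsAntidiagonal] at hde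
  have hd : d ≤ n := Nat.le_of_dvd (Nat.pos_of_ne_zero hde.2) ⟨e, hde.1.symm⟩
  rw [hx d (lt_of_le_of_lt hd hn), zero_mul]

lemma Van_pow {x : ArithmeticFunction ℂ} (hx : x 1 = 0) (k : ℕ) : Van (k + 1) (x ^ k) := by
  induction k with
  | zero =>
    intro n hn
    interval_cases n
    simp
  | succ k ih =>
    intro n hn
    rw [pow_succ', ArithmeticFunction.mul_apply, Finset.sum_eq_zero]
    rintro ⟨d, e⟩ hde
    rw [Nat.mem_divisorsAntidiagonal] at hde
    rcases eq_or_ne d 1 with rfl | hd1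
    · rw [hx, zero_mul]
    · have hd0 : d ≠ 0 := by rintro rfl; exact hde.2 (by simpa using hde.1.symm)
      have hd2 : 2 ≤ d := by omega
      have h2e : 2 * e ≤ n := hde.1 ▸ Nat.mul_le_mul_right e hd2
      have : e < k + 1 := by omega
      rw [ih e this, mul_zero]

/-- Evaluation at `n` as an additive monoid hom. -/
noncomputable def evalH (n : ℕ) : ArithmeticFunction ℂ →+ ℂ where
  toFun f := f n
  map_zero' := rfl
  map_add' _ _ := rfl

lemma sum_apply' {ι : Type*} (s : Finset ι) (t : ι → ArithmeticFunction ℂ) (n : ℕ) :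
    (∑ i ∈ s, t i) n = ∑ i ∈ s, t i n :=
  map_sum (evalH n) t s

lemma sub_one_eq_zero (f : ArithmeticFunction ℂ) : (f - CC (f 1)) 1 = 0 := by
  show f 1 - CC (f 1) 1 = 0
  simp [CC_apply]

noncomputable def SS (f : ArithmeticFunction ℂ) (m : ℕ) : ArithmeticFunction ℂ :=
  CC (Complex.exp (f 1)) *
    ∑ k ∈ Finset.range m, CC ((Nat.factorial k : ℂ))⁻¹ * (f - CC (f 1)) ^ k

lemma ExpA_apply (f : ArithmeticFunction ℂ) (n : ℕ) :
    ExpA f n = Complex.exp (f 1) *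
      ((∑ k ∈ Finset.range (n + 1), CC ((Nat.factorial k : ℂ))⁻¹ * (f - CC (f 1)) ^ k) n) := rfl

lemma term_vanish (f : ArithmeticFunction ℂ) {k n : ℕ} (h : n < k + 1) :
    (CC ((Nat.factorial k : ℂ))⁻¹ * (f - CC (f 1)) ^ k) n = 0 := by
  rw [CC_mul_apply, Van_pow (sub_one_eq_zero f) k n h, mul_zero]

lemma SS_sub_Exp_Van (f : ArithmeticFunction ℂ) (m : ℕ) : Van m (SS f m - ExpA f) := by
  intro n hn
  show SS f m n - ExpA f n = 0
  rw [SS, CC_mul_apply, ExpA_apply, sum_apply', sum_apply']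
  rw [Finset.sum_subset (Finset.range_subset_range.2 (by omega) :
      Finset.range (n + 1) ⊆ Finset.range m)]
  · ring
  · intro k hk hk'
    simp only [Finset.mem_range] at hk hk'
    exact term_vanish f (by omega)

lemma nrm_nonneg (x : ArithmeticFunction ℂ) : 0 ≤ nrm x := by
  unfold nrm; split <;> positivity

lemma exists_ne_of_ne_zero {x : ArithmeticFunction ℂ} (hx : x ≠ 0) : ∃ n, x n ≠ 0 := by
  by_contra h
  push_neg at h
  exact hx (ArithmeticFunction.ext h)

lemma ord_mem {x : ArithmeticFunction ℂ} (hx : x ≠ 0) : x (ordN x) ≠ 0 :=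
  Nat.sInf_mem (exists_ne_of_ne_zero hx)

lemma ord_pos {x : ArithmeticFunction ℂ} (hx : x ≠ 0) : 0 < ordN x := by
  rcases Nat.eq_zero_or_pos (ordN x) with h | h
  · exact absurd (h ▸ ord_mem hx) (by simp)
  · exact h

lemma apply_eq_zero_of_lt_ord {x : ArithmeticFunction ℂ} {n : ℕ} (h : n < ordN x) : x n = 0 := by
  by_contra hc
  exact absurd (Nat.sInf_le hc) (not_le.2 h)

lemma Van_nrm_le {N : ℕ} (hN : 0 < N) {x : ArithmeticFunction ℂ} (h : Van N x) :
    nrm x ≤ 1 / N := by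
  unfold nrm
  split
  · positivity
  · rename_i hx
    have hord : N ≤ ordN x := by
      by_contra hc
      exact ord_mem hx (h _ (not_le.1 hc))
    exact one_div_le_one_div_of_le (by exact_mod_cast hN) (by exact_mod_cast hord)

lemma tendsto_of_Van {s : ℕ → ArithmeticFunction ℂ} {l : ArithmeticFunction ℂ}
    (h : ∀ m, Van m (s m - l)) : TendstoA s l := by
  unfold TendstoA
  apply tendsto_of_tendsto_of_tendsto_of_le_of_le' (tendsto_const_nhds (x := (0:ℝ)))
    tendsto_one_div_atTop_nhds_zero_nat
  · exact Filter.Eventually.of_forall fun m => nrm_nonneg _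
  · filter_upwards [Filter.eventually_ge_atTop 1] with m hm
    exact Van_nrm_le hm (h m)

lemma entry_eq_zero_of_nrm_lt {x : ArithmeticFunction ℂ} {N : ℕ} (hN : 0 < N)
    (h : nrm x < 1 / N) : x N = 0 := by
  unfold nrm at h
  split at h
  · rename_i hx; rw [hx]; rfl
  · rename_i hx
    have hNo : N < ordN x := by
      by_contra hc
      push_neg at hc
      have h2 : (1:ℝ) / N ≤ 1 / ordN x :=
        one_div_le_one_div_of_le (by exact_mod_cast ord_pos hx) (by exact_mod_cast hc)
      linarith
    exact apply_eq_zero_of_lt_ord hNo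

lemma tendstoA_unique {s : ℕ → ArithmeticFunction ℂ} {a b : ArithmeticFunction ℂ}
    (ha : TendstoA s a) (hb : TendstoA s b) : a = b := by
  by_contra hab
  have hx : a - b ≠ 0 := sub_ne_zero.2 hab
  set N := ordN (a - b) with hNdef
  have hN : 0 < N := ord_pos hx
  have hpos : (0:ℝ) < 1 / N := by positivity
  have ha' := Metric.tendsto_atTop.1 ha (1 / N) hpos
  have hb' := Metric.tendsto_atTop.1 hb (1 / N) hpos
  obtain ⟨Ma, hMa⟩ := ha'
  obtain ⟨Mb, hMb⟩ := hb'
  set m := max Ma Mb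
  have h1 : nrm (s m - a) < 1 / N := by
    have := hMa m (le_max_left _ _)
    rwa [Real.dist_eq, sub_zero, abs_of_nonneg (nrm_nonneg _)] at this
  have h2 : nrm (s m - b) < 1 / N := by
    have := hMb m (le_max_right _ _)
    rwa [Real.dist_eq, sub_zero, abs_of_nonneg (nrm_nonneg _)] at this
  have e1 : (s m - a) N = 0 := entry_eq_zero_of_nrm_lt hN h1
  have e2 : (s m - b) N = 0 := entry_eq_zero_of_nrm_lt hN h2
  have : (a - b) N = 0 := by
    have : (a - b) N = (s m - b) N - (s m - a) N := by
      show a N - b N = (s m N - b N) - (s m N - a N)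
      ring
    rw [this, e1, e2, sub_zero]
  exact ord_mem hx this

section Deriv

variable {D : ArithmeticFunction ℂ → ArithmeticFunction ℂ} (hD : IsDerivationA D)
include hD

lemma D_zero : D 0 = 0 := by
  have h := hD.1 0 0
  rw [add_zero] at h
  exact right_eq_add.mp h

lemma D_one : D 1 = 0 := by
  have h := hD.2.2 1 1
  rw [mul_one, one_mul, mul_one] at h
  exact right_eq_add.mp h

lemma D_CC (c : ℂ) : D (CC c) = 0 := by
  have := hD.2.1 c 1
  rw [mul_one, D_one hD, mul_zero] at this
  exact this

lemma D_sub (x y : ArithmeticFunction ℂ) : D (x - y) = D x - D y := by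
  have h1 : D (x - y) + D y = D x := by
    rw [← hD.1, sub_add_cancel]
  exact eq_sub_of_add_eq h1

lemma D_pow (x : ArithmeticFunction ℂ) (k : ℕ) :
    D (x ^ (k + 1)) = CC ((k : ℂ) + 1) * (x ^ k * D x) := by
  induction k with
  | zero => simp [hD.2.2]
  | succ k ih =>
    have : x ^ (k + 2) = x * x ^ (k + 1) := by ring
    rw [this, hD.2.2, ih]
    have hCC : CC ((k : ℂ) + 1 + 1) = CC ((k : ℂ) + 1) + 1 := by
      rw [map_add, map_one]
    push_cast
    rw [hCC]
    ring

lemma D_sum {ι : Type*} (s : Finset ι) (t : ι → ArithmeticFunction ℂ) :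
    D (∑ i ∈ s, t i) = ∑ i ∈ s, D (t i) := by
  classical
  induction s using Finset.induction with
  | empty => simpa using D_zero hD
  | insert _ _ hni ih =>
    rw [Finset.sum_insert hni, Finset.sum_insert hni, hD.1, ih]

lemma D_SS (f : ArithmeticFunction ℂ) (m : ℕ) :
    D (SS f (m + 1)) = SS f m * D f := by
  set x := f - CC (f 1) with hx
  have hDx : D x = D f := by
    rw [hx, D_sub hD, D_CC hD, sub_zero]
  rw [SS, hD.2.1, D_sum hD]
  rw [Finset.sum_range_succ']
  have h0 : D (CC ((Nat.factorial 0 : ℂ))⁻¹ * x ^ 0) = 0 := by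
    rw [pow_zero, Nat.factorial_zero, Nat.cast_one, inv_one, map_one, one_mul, D_one hD]
  rw [h0, add_zero]
  have hterm : ∀ k, D (CC ((Nat.factorial (k + 1) : ℂ))⁻¹ * x ^ (k + 1)) =
      (CC ((Nat.factorial k : ℂ))⁻¹ * x ^ k) * D f := by
    intro k
    rw [hD.2.1, D_pow hD, hDx]
    have : ((Nat.factorial (k + 1) : ℂ))⁻¹ * ((k : ℂ) + 1) = ((Nat.factorial k : ℂ))⁻¹ := by
      rw [Nat.factorial_succ]
      push_cast
      have h1 : ((k : ℂ) + 1) ≠ 0 := by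
        have : ((k + 1 : ℕ) : ℂ) ≠ 0 := Nat.cast_ne_zero.2 (Nat.succ_ne_zero k)
        push_cast at this
        exact this
      have h2 : (Nat.factorial k : ℂ) ≠ 0 := by
        exact_mod_cast Nat.cast_ne_zero.2 (Nat.factorial_ne_zero k)
      field_simp
    calc CC ((Nat.factorial (k + 1) : ℂ))⁻¹ * (CC ((k : ℂ) + 1) * (x ^ k * D f))
        = CC (((Nat.factorial (k + 1) : ℂ))⁻¹ * ((k : ℂ) + 1)) * (x ^ k * D f) := by
          rw [map_mul]; ring
      _ = (CC ((Nat.factorial k : ℂ))⁻¹ * x ^ k) * D f := by rw [this]; ring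
  rw [Finset.sum_congr rfl fun k _ => hterm k, ← Finset.sum_mul, SS]
  ring

end Deriv

lemma D_ExpA {D : ArithmeticFunction ℂ → ArithmeticFunction ℂ}
    (hD : IsDerivationA D ∧ ContinuousA D) (f : ArithmeticFunction ℂ) :
    D (ExpA f) = ExpA f * D f := by
  obtain ⟨hder, hcont⟩ := hD
  have h1 : TendstoA (fun m => SS f (m + 1)) (ExpA f) :=
    tendsto_of_Van fun m => (SS_sub_Exp_Van f (m + 1)).mono (Nat.le_succ m)
  have h2 : TendstoA (fun m => D (SS f (m + 1))) (D (ExpA f)) := hcont _ _ h1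
  have h3 : TendstoA (fun m => D (SS f (m + 1))) (ExpA f * D f) := by
    apply tendsto_of_Van
    intro m
    rw [D_SS hder f m]
    have : SS f m * D f - ExpA f * D f = (SS f m - ExpA f) * D f := by ring
    rw [this]
    exact Van_mul_left (SS_sub_Exp_Van f m) _
  exact tendstoA_unique h2 h3

lemma ExpA_apply_one (f : ArithmeticFunction ℂ) : ExpA f 1 = Complex.exp (f 1) := by
  rw [ExpA_apply, sum_apply', Finset.sum_range_succ, Finset.sum_range_one]
  rw [CC_mul_apply, CC_mul_apply, pow_zero, pow_one, sub_one_eq_zero]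
  simp [ArithmeticFunction.one_apply]

lemma ExpA_ne_zero (f : ArithmeticFunction ℂ) : ExpA f ≠ 0 := by
  intro h
  have := ExpA_apply_one f
  rw [h] at this
  exact Complex.exp_ne_zero (f 1) (by simpa using this.symm)

lemma mul_ne_zero' {x y : ArithmeticFunction ℂ} (hx : x ≠ 0) (hy : y ≠ 0) : x * y ≠ 0 := by
  intro h
  set a := ordN x
  set b := ordN y
  have ha : x a ≠ 0 := ord_mem hx
  have hb : y b ≠ 0 := ord_mem hy
  have ha0 : 0 < a := ord_pos hx
  have hb0 : 0 < b := ord_pos hy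
  have key : (x * y) (a * b) = x a * y b := by
    rw [ArithmeticFunction.mul_apply]
    apply Finset.sum_eq_single_of_mem (a, b)
    · exact Nat.mem_divisorsAntidiagonal.2 ⟨rfl, by positivity⟩
    · rintro ⟨d, e⟩ hde hne
      rw [Nat.mem_divisorsAntidiagonal] at hde
      by_cases hda : d < a
      · rw [apply_eq_zero_of_lt_ord hda, zero_mul]
      by_cases heb : e < b
      · rw [apply_eq_zero_of_lt_ord heb, mul_zero]
      push_neg at hda heb
      exfalso
      apply hne
      have h1 : a * e ≤ d * e := Nat.mul_le_mul_right e hda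
      have h2 : a * b ≤ a * e := Nat.mul_le_mul_left a heb
      have he : e = b := by
        have : a * e ≤ a * b := hde.1 ▸ h1
        have := Nat.le_of_mul_le_mul_left this ha0
        omega
      have hd : d = a := by
        have : d * b = a * b := he ▸ hde.1
        have := Nat.eq_of_mul_eq_mul_right hb0 this
        omega
      simp [hd, he]
  rw [h] at key
  exact mul_ne_zero ha hb (by simpa using key.symm)

instance : Nontrivial (ArithmeticFunction ℂ) := by
  refine ⟨0, 1, fun h => ?_⟩
  have h1 : (0 : ArithmeticFunction ℂ) 1 = (1 : ArithmeticFunction ℂ) 1 := by rw [h]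
  simp [ArithmeticFunction.one_apply] at h1

noncomputable instance : NoZeroDivisors (ArithmeticFunction ℂ) where
  eq_zero_or_eq_zero_of_mul_eq_zero {x y} h := by
    by_contra hc
    push_neg at hc
    exact mul_ne_zero' hc.1 hc.2 h

lemma det_step (n : ℕ) (h : Fin n → ArithmeticFunction ℂ)
    (D : Fin n → ArithmeticFunction ℂ → ArithmeticFunction ℂ)
    (hD : ∀ j, IsDerivationA (D j) ∧ ContinuousA (D j)) :
    Matrix.det (Matrix.of fun i j => D j (ExpA (h i))) = 0 ↔
    Matrix.det (Matrix.of fun i j => D j (h i)) = 0 := by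
  have hm : (Matrix.of fun i j => D j (ExpA (h i))) =
      Matrix.diagonal (fun i => ExpA (h i)) * Matrix.of fun i j => D j (h i) := by
    refine Matrix.ext fun i j => ?_
    rw [Matrix.diagonal_mul, Matrix.of_apply, Matrix.of_apply]
    exact D_ExpA (hD j) (h i)
  rw [hm, Matrix.det_mul, Matrix.det_diagonal]
  have hprod : (∏ i, ExpA (h i)) ≠ 0 :=
    Finset.prod_ne_zero_iff.2 fun i _ => ExpA_ne_zero (h i)
  rw [mul_eq_zero]
  tauto

lemma det_iter (n : ℕ) (D : Fin n → ArithmeticFunction ℂ → ArithmeticFunction ℂ)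
    (hD : ∀ j, IsDerivationA (D j) ∧ ContinuousA (D j)) (m : ℕ) :
    ∀ h : Fin n → ArithmeticFunction ℂ,
      (Matrix.det (Matrix.of fun i j => D j (ExpA^[m] (h i))) = 0 ↔
       Matrix.det (Matrix.of fun i j => D j (h i)) = 0) := by
  induction m with
  | zero => intro h; simp
  | succ m ih =>
    intro h
    have heq : (Matrix.of fun i j => D j (ExpA^[m + 1] (h i))) =
        Matrix.of fun i j => D j (ExpA^[m] (ExpA (h i))) := by
      refine Matrix.ext fun i j => ?_
      rw [Matrix.of_apply, Matrix.of_apply, Function.iterate_succ_apply]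
    rw [heq]
    exact (ih fun i => ExpA (h i)).trans (det_step n h D hD)

end Stmt6Helpers

open Stmt6Helpers in
/-- For continuous derivations `D_1, …, D_n` and an integer `k` such that `Exp^k (f i)` is
defined (`g i` denotes `Exp^k (f i)`, which for negative `k` means an iterated Rearick
logarithm, i.e. `Exp^[-k] (g i) = f i`), we have
`det (D_j (f i)) = 0 ↔ det (D_j (Exp^k (f i))) = 0`. -/
theorem stmt6 (n : ℕ) (f g : Fin n → ArithmeticFunction ℂ)
    (D : Fin n → ArithmeticFunction ℂ → ArithmeticFunction ℂ)
    (hD : ∀ j, IsDerivationA (D j) ∧ ContinuousA (D j)) (k : ℤ)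
    (hk : (0 ≤ k ∧ ∀ i, g i = ExpA^[k.toNat] (f i)) ∨
          (k < 0 ∧ ∀ i, ExpA^[(-k).toNat] (g i) = f i)) :
    Matrix.det (Matrix.of fun i j => D j (f i)) = 0 ↔
      Matrix.det (Matrix.of fun i j => D j (g i)) = 0 := by
  rcases hk with ⟨_, hg⟩ | ⟨_, hf⟩
  · have heq : (Matrix.of fun i j => D j (g i)) =
        Matrix.of fun i j => D j (ExpA^[k.toNat] (f i)) := by
      refine Matrix.ext fun i j => ?_
      rw [Matrix.of_apply, Matrix.of_apply, hg i]
    rw [heq]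
    exact (det_iter n D hD k.toNat f).symm
  · have heq : (Matrix.of fun i j => D j (f i)) =
        Matrix.of fun i j => D j (ExpA^[(-k).toNat] (g i)) := by
      refine Matrix.ext fun i j => ?_
      rw [Matrix.of_apply, Matrix.of_apply, hf i]
    rw [heq]
    exact det_iter n D hD (-k).toNat g
end
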